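/- arXiv:2312.17623 — 4 statements merged into one kernel-verified Lean document; each statement's English description precedes it below -/
import Mathlib

section
/- If a treatment choice problem with Gaussian data exhibits nontrivial partial identification, then every decision rule is welfare-admissible: for every Borel-measurable d : ℝⁿ → [0,1] there is no Borel-measurable d′ : ℝⁿ → [0,1] such that U(θ)·E_{m(θ)}[d′(Y)] ≥ U(θ)·E_{m(θ)}[d(Y)] for all θ ∈ Θ with strict inequality for at least one θ ∈ Θ (equivalently, no d′ whose expected welfare E_{m(θ)}[W₀(θ) + U(θ)·d′(Y)] weakly dominates that of d everywhere and strictly dominates it somewhere). -/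
open MeasureTheory Matrix Set

noncomputable section

/-- Density of the multivariate normal distribution `N(μ, S)` on `ℝⁿ`. -/
def gaussPdf (n : ℕ) (S : Matrix (Fin n) (Fin n) ℝ) (μ : Fin n → ℝ) (y : Fin n → ℝ) : ℝ :=
  (Real.sqrt ((2 * Real.pi) ^ n * S.det))⁻¹ *
    Real.exp (-(1 / 2) * ((y - μ) ⬝ᵥ (S⁻¹ *ᵥ (y - μ))))

/-- The multivariate normal distribution `N(μ, S)` on `ℝⁿ`. -/
def gaussMeasure (n : ℕ) (S : Matrix (Fin n) (Fin n) ℝ) (μ : Fin n → ℝ) :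
    Measure (Fin n → ℝ) :=
  volume.withDensity fun y => ENNReal.ofReal (gaussPdf n S μ y)

/-- A decision rule: a Borel measurable map into `[0,1]`. -/
def IsRule (n : ℕ) (d : (Fin n → ℝ) → ℝ) : Prop :=
  Measurable d ∧ ∀ y, d y ∈ Set.Icc (0 : ℝ) 1

namespace EIA

/-- 1-D integrable dominating function. -/
lemma oneD_integrable {β γ t0 : ℝ} (hβ : 0 < β) (hγ : 0 ≤ γ) :
    Integrable (fun s : ℝ => (1 + γ * |s - t0|) * Real.exp (-β * (s - t0) ^ 2 + γ * |s - t0|)) := by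
  have key : Integrable (fun s : ℝ => (1 + γ * |s|) * Real.exp (-β * s ^ 2 + γ * |s|)) := by
    have hint : Integrable (fun s : ℝ => Real.exp (2 * γ ^ 2 / β) * Real.exp (-(β / 2) * s ^ 2)) :=
      (integrable_exp_neg_mul_sq (by linarith)).const_mul _
    refine hint.mono' ?_ ?_
    · apply Continuous.aestronglyMeasurable
      fun_prop
    · filter_upwards with s
      have h1 : 1 + γ * |s| ≤ Real.exp (γ * |s|) := by
        have := Real.add_one_le_exp (γ * |s|); linarith
      have h2 : -β * s ^ 2 + 2 * (γ * |s|) ≤ -(β / 2) * s ^ 2 + 2 * γ ^ 2 / β := by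
        have h2' : (2 * (γ * |s|) - β / 2 * s ^ 2) * β ≤ 2 * γ ^ 2 := by
          rw [← sq_abs s]
          nlinarith [sq_nonneg (β * |s| - 2 * γ)]
        have h2'' : 2 * (γ * |s|) - β / 2 * s ^ 2 ≤ 2 * γ ^ 2 / β := (le_div_iff₀ hβ).2 h2'
        linarith
      have hnn : 0 ≤ 1 + γ * |s| := by positivity
      calc ‖(1 + γ * |s|) * Real.exp (-β * s ^ 2 + γ * |s|)‖
          = (1 + γ * |s|) * Real.exp (-β * s ^ 2 + γ * |s|) := by
            rw [Real.norm_eq_abs, abs_of_nonneg (by positivity)]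
        _ ≤ Real.exp (γ * |s|) * Real.exp (-β * s ^ 2 + γ * |s|) := by
            apply mul_le_mul_of_nonneg_right h1 (Real.exp_pos _).le
        _ = Real.exp (-β * s ^ 2 + 2 * (γ * |s|)) := by
            rw [← Real.exp_add]; ring_nf
        _ ≤ Real.exp (2 * γ ^ 2 / β) * Real.exp (-(β / 2) * s ^ 2) := by
            rw [← Real.exp_add]
            apply Real.exp_le_exp.2; linarith
  exact key.comp_sub_right t0

/-- Product of the 1-D dominating functions is integrable on `ℝⁿ`. -/
lemma prod_integrable {n : ℕ} {β : ℝ} (hβ : 0 < β) (c : Fin n → ℝ) (hc : ∀ i, 0 ≤ c i)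
    (μ₀ : Fin n → ℝ) :
    Integrable (fun y : Fin n → ℝ =>
      ∏ i, (1 + c i * |y i - μ₀ i|) * Real.exp (-β * (y i - μ₀ i) ^ 2 + c i * |y i - μ₀ i|)) :=
  Integrable.fintype_prod (𝕜 := ℝ) fun i => oneD_integrable hβ (hc i)

lemma one_add_sum_le_prod {ι : Type*} (s : Finset ι) (x : ι → ℝ) (hx : ∀ i ∈ s, 0 ≤ x i) :
    1 + ∑ i ∈ s, x i ≤ ∏ i ∈ s, (1 + x i) := by
  classical
  induction s using Finset.cons_induction with
  | empty => simp
  | cons a s ha ih =>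
    rw [Finset.sum_cons, Finset.prod_cons]
    have h1 : 0 ≤ x a := hx a (Finset.mem_cons_self a s)
    have h2 : ∀ i ∈ s, 0 ≤ x i := fun i hi => hx i (Finset.mem_cons_of_mem hi)
    have h3 := ih h2
    have h4 : 0 ≤ ∑ i ∈ s, x i := Finset.sum_nonneg h2
    nlinarith


lemma continuous_quad {n : ℕ} (A : Matrix (Fin n) (Fin n) ℝ) :
    Continuous fun x : Fin n → ℝ => x ⬝ᵥ (A *ᵥ x) := by
  have h : (fun x : Fin n → ℝ => x ⬝ᵥ (A *ᵥ x))
      = fun x => ∑ i, x i * ∑ j, A i j * x j := by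
    ext x; simp [dotProduct, Matrix.mulVec]
  rw [h]
  exact continuous_finset_sum _ fun i _ => (continuous_apply i).mul
    (continuous_finset_sum _ fun j _ => continuous_const.mul (continuous_apply j))

lemma continuous_quad_shift {n : ℕ} (A : Matrix (Fin n) (Fin n) ℝ) (μ : Fin n → ℝ) :
    Continuous fun y : Fin n → ℝ => (y - μ) ⬝ᵥ (A *ᵥ (y - μ)) :=
  (continuous_quad A).comp (continuous_id.sub continuous_const)

lemma continuous_lin {n : ℕ} (μ₀ w : Fin n → ℝ) :
    Continuous fun y : Fin n → ℝ => (y - μ₀) ⬝ᵥ w := by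
  have h : (fun y : Fin n → ℝ => (y - μ₀) ⬝ᵥ w) = fun y => ∑ i, (y i - μ₀ i) * w i := by
    ext y; simp [dotProduct]
  rw [h]
  exact continuous_finset_sum _ fun i _ =>
    (((continuous_apply i).sub continuous_const).mul continuous_const)

lemma quad_lower {n : ℕ} (hn : 1 ≤ n) (A : Matrix (Fin n) (Fin n) ℝ) (hA : A.PosDef) :
    ∃ α : ℝ, 0 < α ∧ ∀ x : Fin n → ℝ, α * ∑ i, x i ^ 2 ≤ x ⬝ᵥ (A *ᵥ x) := by
  have hpos : ∀ x : Fin n → ℝ, x ≠ 0 → 0 < x ⬝ᵥ (A *ᵥ x) := by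
    intro x hx
    have := hA.dotProduct_mulVec_pos hx
    simpa using this
  set sph : Set (Fin n → ℝ) := {x | ∑ i, x i ^ 2 = 1} with hsph
  have hcont : Continuous fun x : Fin n → ℝ => ∑ i, x i ^ 2 :=
    continuous_finset_sum _ fun i _ => (continuous_apply i).pow 2
  have hclosed : IsClosed sph := isClosed_eq hcont continuous_const
  have hbdd : Bornology.IsBounded sph := by
    apply (Metric.isBounded_closedBall (x := (0 : Fin n → ℝ)) (r := 1)).subset
    intro x hx
    simp only [Metric.mem_closedBall, dist_zero_right]
    refine (pi_norm_le_iff_of_nonneg zero_le_one).2 fun i => ?_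
    have h1 : x i ^ 2 ≤ 1 := by
      have h2 : x i ^ 2 ≤ ∑ j, x j ^ 2 :=
        Finset.single_le_sum (f := fun j => x j ^ 2) (fun j _ => sq_nonneg _)
          (Finset.mem_univ i)
      calc x i ^ 2 ≤ ∑ j, x j ^ 2 := h2
        _ = 1 := hx
    simpa [Real.norm_eq_abs] using (sq_le_one_iff_abs_le_one (x i)).1 h1
  have hcpt : IsCompact sph := Metric.isCompact_of_isClosed_isBounded hclosed hbdd
  have hne : sph.Nonempty := by
    refine ⟨fun j => if j = ⟨0, hn⟩ then 1 else 0, ?_⟩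
    simp [hsph, Finset.sum_ite_eq']
  obtain ⟨x0, hx0mem, hmin⟩ := hcpt.exists_isMinOn hne (continuous_quad A).continuousOn
  have hx0ne : x0 ≠ 0 := by
    intro h
    rw [h] at hx0mem
    simp [hsph] at hx0mem
  refine ⟨x0 ⬝ᵥ (A *ᵥ x0), hpos x0 hx0ne, fun x => ?_⟩
  by_cases hx : x = 0
  · simp [hx]
  · set r : ℝ := Real.sqrt (∑ i, x i ^ 2) with hr
    have hsum : 0 < ∑ i, x i ^ 2 := by
      obtain ⟨i, hi⟩ := Function.ne_iff.1 hx
      have h2 : (0:ℝ) < x i ^ 2 :=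
        lt_of_le_of_ne (sq_nonneg _) (Ne.symm (pow_ne_zero 2 hi))
      exact h2.trans_le (Finset.single_le_sum (f := fun j => x j ^ 2)
        (fun j _ => sq_nonneg _) (Finset.mem_univ i))
    have hrpos : 0 < r := Real.sqrt_pos.2 hsum
    have hr2 : r ^ 2 = ∑ i, x i ^ 2 := Real.sq_sqrt hsum.le
    set u : Fin n → ℝ := r⁻¹ • x with hu
    have humem : u ∈ sph := by
      simp only [hsph, Set.mem_setOf_eq, hu, Pi.smul_apply, smul_eq_mul, mul_pow]
      rw [← Finset.mul_sum, ← hr2]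
      field_simp
    have hqu : u ⬝ᵥ (A *ᵥ u) = r⁻¹ * (r⁻¹ * (x ⬝ᵥ (A *ᵥ x))) := by
      rw [hu, Matrix.mulVec_smul, smul_dotProduct, dotProduct_smul]
      simp [smul_eq_mul]
    have hle : x0 ⬝ᵥ (A *ᵥ x0) ≤ r⁻¹ * (r⁻¹ * (x ⬝ᵥ (A *ᵥ x))) := by
      rw [← hqu]; exact hmin humem
    have : (x0 ⬝ᵥ (A *ᵥ x0)) * r ^ 2 ≤ x ⬝ᵥ (A *ᵥ x) := by
      have hrne : r ≠ 0 := hrpos.ne'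
      have hrr : r⁻¹ * (r⁻¹ * (x ⬝ᵥ (A *ᵥ x))) * r ^ 2 = x ⬝ᵥ (A *ᵥ x) := by
        rw [sq]
        field_simp
      calc (x0 ⬝ᵥ (A *ᵥ x0)) * r ^ 2 ≤ r⁻¹ * (r⁻¹ * (x ⬝ᵥ (A *ᵥ x))) * r ^ 2 :=
            mul_le_mul_of_nonneg_right hle (sq_nonneg r)
        _ = x ⬝ᵥ (A *ᵥ x) := hrr
    rw [← hr2]; linarith

lemma dot_symm {n : ℕ} {A : Matrix (Fin n) (Fin n) ℝ} (hAs : Aᵀ = A)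
    (x y : Fin n → ℝ) : x ⬝ᵥ (A *ᵥ y) = y ⬝ᵥ (A *ᵥ x) := by
  rw [Matrix.dotProduct_mulVec]
  conv_lhs => rw [← hAs]
  rw [Matrix.vecMul_transpose, dotProduct_comm]

set_option maxHeartbeats 3000000 in
/-- **Main analytic step.** If the Gaussian-weighted integral of a bounded measurable
function vanishes for all means in a nonempty open set, it vanishes for every mean. -/
lemma gauss_integral_zero_everywhere {n : ℕ} (hn : 1 ≤ n)
    (S : Matrix (Fin n) (Fin n) ℝ) (hS : S.PosDef)
    (H : (Fin n → ℝ) → ℝ) (hH : Measurable H) (hHb : ∀ y, |H y| ≤ 1)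
    {Sop : Set (Fin n → ℝ)} (hne : Sop.Nonempty) (hop : IsOpen Sop)
    (hzero : ∀ μ ∈ Sop, (∫ y, H y * gaussPdf n S μ y) = 0)
    (μstar : Fin n → ℝ) : (∫ y, H y * gaussPdf n S μstar y) = 0 := by
  classical
  set A : Matrix (Fin n) (Fin n) ℝ := S⁻¹ with hAdef
  have hA : A.PosDef := hS.inv
  have hAs : Aᵀ = A := by
    have h := hA.1
    rwa [Matrix.IsHermitian, Matrix.conjTranspose_eq_transpose_of_trivial] at h
  obtain ⟨α, hα, hquad⟩ := quad_lower hn A hA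
  obtain ⟨μ₀, hμ₀⟩ := hne
  obtain ⟨ε, hε, hball⟩ := Metric.isOpen_iff.1 hop μ₀ hμ₀
  set v : Fin n → ℝ := μstar - μ₀ with hvdef
  set a : ℝ := v ⬝ᵥ (A *ᵥ v) with hadef
  have ha : 0 ≤ a := by
    by_cases hv : v = 0
    · simp [hadef, hv]
    · have h := hA.dotProduct_mulVec_pos hv
      simp only [star_trivial] at h
      exact h.le
  set b : (Fin n → ℝ) → ℝ := fun y => (y - μ₀) ⬝ᵥ (A *ᵥ v) with hbdef
  set q : (Fin n → ℝ) → ℝ := fun y => (y - μ₀) ⬝ᵥ (A *ᵥ (y - μ₀)) with hqdef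
  set c0 : ℝ := (Real.sqrt ((2 * Real.pi) ^ n * S.det))⁻¹ with hc0def
  have hc0 : 0 ≤ c0 := by positivity
  have hb_cont : Continuous b := continuous_lin μ₀ (A *ᵥ v)
  have hq_cont : Continuous q := continuous_quad_shift A μ₀
  -- quadratic expansion
  have hexp : ∀ (t : ℝ) (y : Fin n → ℝ),
      (y - (μ₀ + t • v)) ⬝ᵥ (A *ᵥ (y - (μ₀ + t • v)))
        = q y - 2 * t * b y + t ^ 2 * a := by
    intro t y
    have h1 : y - (μ₀ + t • v) = (y - μ₀) - t • v := by abel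
    rw [h1]
    simp only [hqdef, hbdef, hadef]
    simp only [Matrix.mulVec_sub, Matrix.mulVec_smul, sub_dotProduct,
      dotProduct_sub, smul_dotProduct, dotProduct_smul, smul_eq_mul]
    rw [dot_symm hAs v y, dot_symm hAs v μ₀]
    ring
  -- density along the complex line
  have hpdf : ∀ (t : ℝ) (y : Fin n → ℝ),
      gaussPdf n S (μ₀ + t • v) y
        = c0 * Real.exp (-(1/2) * q y) * Real.exp (t * b y - t ^ 2 * (a / 2)) := by
    intro t y
    simp only [gaussPdf, ← hAdef, ← hc0def, hexp t y]
    conv_rhs => rw [mul_assoc, ← Real.exp_add]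
    congr 1
    ring
  -- the complexified integrand
  set coef : (Fin n → ℝ) → ℝ := fun y => H y * (c0 * Real.exp (-(1/2) * q y)) with hcoefdef
  set F : ℂ → (Fin n → ℝ) → ℂ := fun z y =>
    (coef y : ℂ) * Complex.exp (z * (b y : ℂ) - z ^ 2 * ((a / 2 : ℝ) : ℂ)) with hFdef
  set G : ℂ → ℂ := fun z => ∫ y, F z y with hGdef
  have hcoef_meas : Measurable coef :=
    hH.mul (measurable_const.mul (Real.measurable_exp.comp
      (measurable_const.mul hq_cont.measurable)))
  have hF_meas : ∀ z : ℂ, AEStronglyMeasurable (F z) volume := by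
    intro z
    apply Measurable.aestronglyMeasurable
    exact (Complex.measurable_ofReal.comp hcoef_meas).mul
      (Complex.measurable_exp.comp
        (((measurable_const.mul (Complex.measurable_ofReal.comp hb_cont.measurable))).sub
          measurable_const))
  -- real values of G
  have hG_real : ∀ t : ℝ, G (t : ℂ)
      = ((∫ y, H y * gaussPdf n S (μ₀ + t • v) y : ℝ) : ℂ) := by
    intro t
    have hpt : ∀ y, F (t : ℂ) y = ((H y * gaussPdf n S (μ₀ + t • v) y : ℝ) : ℂ) := by
      intro y
      rw [hpdf t y]
      simp only [hFdef]
      rw [show ((t : ℂ) * (b y : ℂ) - (t : ℂ) ^ 2 * ((a / 2 : ℝ) : ℂ))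
            = ((t * b y - t ^ 2 * (a / 2) : ℝ) : ℂ) by push_cast; ring]
      rw [← Complex.ofReal_exp, ← Complex.ofReal_mul]
      congr 1
      simp only [hcoefdef]
      ring
    simp only [hGdef]
    rw [show (fun y => F (t : ℂ) y) = fun y => ((H y * gaussPdf n S (μ₀ + t • v) y : ℝ) : ℂ) by
      funext y; exact hpt y]
    exact integral_ofReal
  -- uniform bounds
  have hcoef_bound : ∀ y, |coef y| ≤ c0 * Real.exp (-(1/2) * q y) := by
    intro y
    simp only [hcoefdef]
    rw [abs_mul]
    have h1 : 0 ≤ c0 * Real.exp (-(1/2) * q y) := by positivity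
    calc |H y| * |c0 * Real.exp (-(1/2) * q y)| ≤ 1 * |c0 * Real.exp (-(1/2) * q y)| :=
          mul_le_mul_of_nonneg_right (hHb y) (abs_nonneg _)
      _ = c0 * Real.exp (-(1/2) * q y) := by rw [one_mul, abs_of_nonneg h1]
  -- G is differentiable everywhere
  have hGdiff : Differentiable ℂ G := by
    intro z₀
    set R : ℝ := ‖z₀‖ + 1 with hRdef
    have hR0 : 0 ≤ R := by positivity
    set bound : (Fin n → ℝ) → ℝ := fun y =>
      c0 * Real.exp (R ^ 2 * (a / 2)) *
        ((1 + |b y| + R * a) * Real.exp (-(1/2) * q y + R * |b y|)) with hbounddef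
    -- generic exponent bound
    have hre : ∀ z : ℂ, ‖z‖ ≤ R → ∀ y,
        (z * (b y : ℂ) - z ^ 2 * ((a / 2 : ℝ) : ℂ)).re ≤ R * |b y| + R ^ 2 * (a / 2) := by
      intro z hz y
      have h1 : (z * (b y : ℂ) - z ^ 2 * ((a / 2 : ℝ) : ℂ)).re
          = z.re * b y - (z ^ 2).re * (a / 2) := by
        simp [Complex.sub_re, Complex.mul_re, Complex.ofReal_re, Complex.ofReal_im]
      rw [h1]
      have h2 : z.re * b y ≤ R * |b y| := by
        calc z.re * b y ≤ |z.re * b y| := le_abs_self _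
          _ = |z.re| * |b y| := abs_mul _ _
          _ ≤ R * |b y| := mul_le_mul_of_nonneg_right
              ((Complex.abs_re_le_norm z).trans hz) (abs_nonneg _)
      have ha2 : (0:ℝ) ≤ a / 2 := by linarith
      have h3 : -((z ^ 2).re * (a / 2)) ≤ R ^ 2 * (a / 2) := by
        have h4 : |(z ^ 2).re| ≤ R ^ 2 := by
          calc |(z ^ 2).re| ≤ ‖z ^ 2‖ := Complex.abs_re_le_norm _
            _ = ‖z‖ ^ 2 := by rw [norm_pow]
            _ ≤ R ^ 2 := by nlinarith [norm_nonneg z]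
        calc -((z ^ 2).re * (a / 2)) = (-(z ^ 2).re) * (a / 2) := by ring
          _ ≤ |(z ^ 2).re| * (a / 2) := mul_le_mul_of_nonneg_right (neg_le_abs _) ha2
          _ ≤ R ^ 2 * (a / 2) := mul_le_mul_of_nonneg_right h4 ha2
      calc z.re * b y - (z ^ 2).re * (a / 2)
          = z.re * b y + -((z ^ 2).re * (a / 2)) := by ring
        _ ≤ R * |b y| + R ^ 2 * (a / 2) := add_le_add h2 h3
    have hFle : ∀ z : ℂ, ‖z‖ ≤ R → ∀ y, ‖F z y‖ ≤ bound y := by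
      intro z hz y
      simp only [hFdef]
      rw [norm_mul, Complex.norm_exp,
        Complex.norm_real, Real.norm_eq_abs]
      have h5 : Real.exp ((z * (b y : ℂ) - z ^ 2 * ((a / 2 : ℝ) : ℂ)).re)
          ≤ Real.exp (R * |b y| + R ^ 2 * (a / 2)) := Real.exp_le_exp.2 (hre z hz y)
      calc |coef y| * Real.exp ((z * (b y : ℂ) - z ^ 2 * ((a / 2 : ℝ) : ℂ)).re)
          ≤ (c0 * Real.exp (-(1/2) * q y)) * Real.exp (R * |b y| + R ^ 2 * (a / 2)) :=
            mul_le_mul (hcoef_bound y) h5 (Real.exp_pos _).le (by positivity)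
        _ = c0 * Real.exp (R ^ 2 * (a / 2)) *
              (1 * Real.exp (-(1/2) * q y + R * |b y|)) := by
            simp only [one_mul, mul_assoc, ← Real.exp_add]
            congr 1
            exact congrArg Real.exp (by ring)
        _ ≤ bound y := by
            simp only [hbounddef]
            have h6 : (0:ℝ) < Real.exp (-(1/2) * q y + R * |b y|) := Real.exp_pos _
            have h7 : (0:ℝ) ≤ c0 * Real.exp (R ^ 2 * (a / 2)) := by positivity
            have h8 : (1 : ℝ) ≤ 1 + |b y| + R * a := by
              have h9 := abs_nonneg (b y)
              have h10 := mul_nonneg hR0 ha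
              linarith
            exact mul_le_mul_of_nonneg_left
              (mul_le_mul_of_nonneg_right h8 h6.le) h7
    -- derivative of the integrand
    set F' : ℂ → (Fin n → ℝ) → ℂ := fun z y =>
      (coef y : ℂ) * (Complex.exp (z * (b y : ℂ) - z ^ 2 * ((a / 2 : ℝ) : ℂ)) *
        ((b y : ℂ) - 2 * z * ((a / 2 : ℝ) : ℂ))) with hF'def
    have hmulkey : ∀ (P : ℝ) (y : Fin n → ℝ), 0 ≤ P → P ≤ 1 + |b y| + R * a →
        (c0 * Real.exp (-(1/2) * q y)) * (Real.exp (R * |b y| + R ^ 2 * (a / 2)) * P)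
          ≤ bound y := by
      intro P y hP0 hP1
      have e1 : Real.exp (-(1/2) * q y) * Real.exp (R * |b y| + R ^ 2 * (a / 2))
          = Real.exp (R ^ 2 * (a / 2)) * Real.exp (-(1/2) * q y + R * |b y|) := by
        rw [← Real.exp_add, ← Real.exp_add]
        exact congrArg Real.exp (by ring)
      have heq : (c0 * Real.exp (-(1/2) * q y)) *
          (Real.exp (R * |b y| + R ^ 2 * (a / 2)) * P)
          = c0 * Real.exp (R ^ 2 * (a / 2)) *
              (P * Real.exp (-(1/2) * q y + R * |b y|)) := by
        calc (c0 * Real.exp (-(1/2) * q y)) * (Real.exp (R * |b y| + R ^ 2 * (a / 2)) * P)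
            = (Real.exp (-(1/2) * q y) * Real.exp (R * |b y| + R ^ 2 * (a / 2))) * (c0 * P) := by
              ring
          _ = (Real.exp (R ^ 2 * (a / 2)) * Real.exp (-(1/2) * q y + R * |b y|)) * (c0 * P) := by
              rw [e1]
          _ = c0 * Real.exp (R ^ 2 * (a / 2)) *
                (P * Real.exp (-(1/2) * q y + R * |b y|)) := by ring
      rw [heq]
      simp only [hbounddef]
      exact mul_le_mul_of_nonneg_left
        (mul_le_mul_of_nonneg_right hP1 (Real.exp_pos _).le) (by positivity)
    have hF'le : ∀ z : ℂ, ‖z‖ ≤ R → ∀ y, ‖F' z y‖ ≤ bound y := by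
      intro z hz y
      simp only [hF'def]
      rw [norm_mul, norm_mul, Complex.norm_real, Real.norm_eq_abs,
        Complex.norm_exp]
      have h5 : Real.exp ((z * (b y : ℂ) - z ^ 2 * ((a / 2 : ℝ) : ℂ)).re)
          ≤ Real.exp (R * |b y| + R ^ 2 * (a / 2)) := Real.exp_le_exp.2 (hre z hz y)
      have hnrm : ‖(b y : ℂ) - 2 * z * ((a / 2 : ℝ) : ℂ)‖ ≤ |b y| + R * a := by
        calc ‖(b y : ℂ) - 2 * z * ((a / 2 : ℝ) : ℂ)‖
            ≤ ‖(b y : ℂ)‖ + ‖2 * z * ((a / 2 : ℝ) : ℂ)‖ := norm_sub_le _ _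
          _ = |b y| + 2 * ‖z‖ * (a / 2) := by
              rw [Complex.norm_real, Real.norm_eq_abs, norm_mul, norm_mul,
                Complex.norm_real, Real.norm_eq_abs, abs_of_nonneg (by linarith : (0:ℝ) ≤ a/2)]
              norm_num
          _ ≤ |b y| + R * a := by nlinarith [norm_nonneg z]
      calc |coef y| * (Real.exp ((z * (b y : ℂ) - z ^ 2 * ((a / 2 : ℝ) : ℂ)).re) *
              ‖(b y : ℂ) - 2 * z * ((a / 2 : ℝ) : ℂ)‖)
          ≤ (c0 * Real.exp (-(1/2) * q y)) *
              (Real.exp (R * |b y| + R ^ 2 * (a / 2)) * (|b y| + R * a)) := by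
            apply mul_le_mul (hcoef_bound y) _ (by positivity) (by positivity)
            exact mul_le_mul h5 hnrm (norm_nonneg _) (Real.exp_pos _).le
        _ ≤ bound y := hmulkey _ y (by positivity) (by nlinarith [abs_nonneg (b y)])
    -- integrability of the dominating function
    have hbound_cont : Continuous bound := by
      apply continuous_const.mul
      exact ((continuous_const.add hb_cont.abs).add continuous_const).mul
        (Real.continuous_exp.comp
          ((continuous_const.mul hq_cont).add (continuous_const.mul hb_cont.abs)))
    have hbound_int : Integrable bound := by
      set c : Fin n → ℝ := fun i => (R + 1) * |(A *ᵥ v) i| with hcdef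
      have hcnn : ∀ i, 0 ≤ c i := fun i => mul_nonneg (by linarith) (abs_nonneg _)
      have hΦ := prod_integrable (n := n) (half_pos hα) c hcnn μ₀
      set C : ℝ := c0 * Real.exp (R ^ 2 * (a / 2)) * (1 + R * a) with hCdef
      apply Integrable.mono' (hΦ.const_mul C) hbound_cont.aestronglyMeasurable
      filter_upwards with y
      have hbnn : 0 ≤ bound y := by
        simp only [hbounddef]; positivity
      rw [Real.norm_eq_abs, abs_of_nonneg hbnn]
      -- coordinatewise quantities
      set w : Fin n → ℝ := fun i => y i - μ₀ i with hwdef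
      have hbB : |b y| ≤ ∑ i, |(A *ᵥ v) i| * |w i| := by
        have hby : b y = ∑ i, w i * (A *ᵥ v) i := by
          simp only [hbdef, dotProduct, hwdef, Pi.sub_apply]
        rw [hby]
        calc |∑ i, w i * (A *ᵥ v) i| ≤ ∑ i, |w i * (A *ᵥ v) i| :=
              Finset.abs_sum_le_sum_abs _ _
          _ = ∑ i, |(A *ᵥ v) i| * |w i| := by
              apply Finset.sum_congr rfl; intro i _; rw [abs_mul, mul_comm]
      have hxB : ∀ i, |(A *ᵥ v) i| * |w i| ≤ c i * |w i| := by
        intro i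
        apply mul_le_mul_of_nonneg_right _ (abs_nonneg _)
        simp only [hcdef]
        nlinarith [abs_nonneg ((A *ᵥ v) i)]
      have hbB2 : |b y| ≤ ∑ i, c i * |w i| :=
        hbB.trans (Finset.sum_le_sum fun i _ => hxB i)
      have hRbB : R * |b y| ≤ ∑ i, c i * |w i| := by
        have h1 : R * |b y| ≤ R * ∑ i, |(A *ᵥ v) i| * |w i| :=
          mul_le_mul_of_nonneg_left hbB hR0
        have h2 : R * ∑ i, |(A *ᵥ v) i| * |w i| ≤ ∑ i, c i * |w i| := by
          rw [Finset.mul_sum]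
          apply Finset.sum_le_sum
          intro i _
          have h3 : (0:ℝ) ≤ |(A *ᵥ v) i| * |w i| := mul_nonneg (abs_nonneg _) (abs_nonneg _)
          have h4 : c i * |w i| = (R + 1) * (|(A *ᵥ v) i| * |w i|) := by
            simp only [hcdef]; ring
          rw [h4]
          nlinarith
        linarith
      have hq_ge : α * ∑ i, w i ^ 2 ≤ q y := by
        have h := hquad (y - μ₀)
        simp only [hqdef]
        simpa [hwdef, Pi.sub_apply] using h
      have hsumx : 0 ≤ ∑ i, c i * |w i| :=
        Finset.sum_nonneg fun i _ => mul_nonneg (hcnn i) (abs_nonneg _)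
      -- factor inequalities
      have hfac1 : 1 + |b y| + R * a ≤ (1 + R * a) * (1 + ∑ i, c i * |w i|) := by
        have hra : 0 ≤ R * a := mul_nonneg hR0 ha
        nlinarith
      have hfac1' : 1 + ∑ i, c i * |w i| ≤ ∏ i, (1 + c i * |w i|) :=
        one_add_sum_le_prod _ _ fun i _ => mul_nonneg (hcnn i) (abs_nonneg _)
      have hfac2 : Real.exp (-(1/2) * q y + R * |b y|)
          ≤ ∏ i, Real.exp (-(α/2) * w i ^ 2 + c i * |w i|) := by
        rw [← Real.exp_sum]
        apply Real.exp_le_exp.2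
        have h1 : -(1/2) * q y ≤ ∑ i, -(α/2) * w i ^ 2 := by
          have hss : ∑ i, -(α/2) * w i ^ 2 = -(1/2) * (α * ∑ i, w i ^ 2) := by
            simp only [Finset.mul_sum]
            exact Finset.sum_congr rfl fun i _ => by ring
          rw [hss]
          nlinarith [hq_ge]
        calc -(1/2) * q y + R * |b y|
            ≤ (∑ i, -(α/2) * w i ^ 2) + ∑ i, c i * |w i| := add_le_add h1 hRbB
          _ = ∑ i, (-(α/2) * w i ^ 2 + c i * |w i|) := Finset.sum_add_distrib.symm
      -- combine
      have hprod_nn : 0 ≤ ∏ i, (1 + c i * |w i|) :=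
        Finset.prod_nonneg fun i _ => by positivity
      have hexp_nn : 0 ≤ ∏ i, Real.exp (-(α/2) * w i ^ 2 + c i * |w i|) :=
        Finset.prod_nonneg fun i _ => (Real.exp_pos _).le
      have hF1E : (1 + |b y| + R * a) * Real.exp (-(1/2) * q y + R * |b y|)
          ≤ ((1 + R * a) * ∏ i, (1 + c i * |w i|)) *
              ∏ i, Real.exp (-(α/2) * w i ^ 2 + c i * |w i|) := by
        apply mul_le_mul _ hfac2 (Real.exp_pos _).le _
        · calc 1 + |b y| + R * a ≤ (1 + R * a) * (1 + ∑ i, c i * |w i|) := hfac1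
            _ ≤ (1 + R * a) * ∏ i, (1 + c i * |w i|) := by
                apply mul_le_mul_of_nonneg_left hfac1' (by nlinarith [mul_nonneg hR0 ha])
        · apply mul_nonneg (by nlinarith [mul_nonneg hR0 ha]) hprod_nn
      calc bound y = (c0 * Real.exp (R ^ 2 * (a / 2))) *
            ((1 + |b y| + R * a) * Real.exp (-(1/2) * q y + R * |b y|)) := by
            simp only [hbounddef]
        _ ≤ (c0 * Real.exp (R ^ 2 * (a / 2))) *
            (((1 + R * a) * ∏ i, (1 + c i * |w i|)) *
              ∏ i, Real.exp (-(α/2) * w i ^ 2 + c i * |w i|)) := by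
            apply mul_le_mul_of_nonneg_left hF1E (by positivity)
        _ = C * ∏ i, (1 + c i * |w i|) * Real.exp (-(α/2) * w i ^ 2 + c i * |w i|) := by
            rw [hCdef, Finset.prod_mul_distrib]
            ring
        _ = C * ∏ i, (1 + c i * |y i - μ₀ i|) *
              Real.exp (-(α/2) * (y i - μ₀ i) ^ 2 + c i * |y i - μ₀ i|) := by
            simp only [hwdef]
    -- apply the dominated-derivative theorem
    have hRz₀ : ‖z₀‖ ≤ R := by simp only [hRdef]; linarith
    have hF_int : Integrable (F z₀) :=
      hbound_int.mono' (hF_meas z₀) (by filter_upwards with y; exact hFle z₀ hRz₀ y)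
    have hF'_meas : AEStronglyMeasurable (F' z₀) volume := by
      apply Measurable.aestronglyMeasurable
      apply (Complex.measurable_ofReal.comp hcoef_meas).mul
      apply Measurable.mul
      · exact Complex.measurable_exp.comp
          (((measurable_const.mul (Complex.measurable_ofReal.comp hb_cont.measurable))).sub
            measurable_const)
      · exact (Complex.measurable_ofReal.comp hb_cont.measurable).sub measurable_const
    have h_bound : ∀ᵐ y ∂(volume : Measure (Fin n → ℝ)),
        ∀ z ∈ Metric.ball z₀ 1, ‖F' z y‖ ≤ bound y := by
      filter_upwards with y z hz
      have : ‖z‖ ≤ R := by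
        have h1 : ‖z - z₀‖ < 1 := by
          rw [← dist_eq_norm]; exact Metric.mem_ball.1 hz
        calc ‖z‖ = ‖z₀ + (z - z₀)‖ := by ring_nf
          _ ≤ ‖z₀‖ + ‖z - z₀‖ := norm_add_le _ _
          _ ≤ R := by simp only [hRdef]; linarith
      exact hF'le z this y
    have h_diff : ∀ᵐ y ∂(volume : Measure (Fin n → ℝ)),
        ∀ z ∈ Metric.ball z₀ 1, HasDerivAt (F · y) (F' z y) z := by
      filter_upwards with y z _
      have hu : HasDerivAt (fun w : ℂ => w * (b y : ℂ) - w ^ 2 * ((a / 2 : ℝ) : ℂ))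
          ((b y : ℂ) - 2 * z * ((a / 2 : ℝ) : ℂ)) z := by
        have h1 : HasDerivAt (fun w : ℂ => w * (b y : ℂ)) ((b y : ℂ)) z := by
          simpa using (hasDerivAt_id z).mul_const ((b y : ℂ))
        have h2 : HasDerivAt (fun w : ℂ => w ^ 2 * ((a / 2 : ℝ) : ℂ))
            (2 * z * ((a / 2 : ℝ) : ℂ)) z := by
          have := (hasDerivAt_pow 2 z).mul_const ((a / 2 : ℝ) : ℂ)
          simpa [pow_one] using this
        exact h1.sub h2
      simpa only [hFdef, hF'def] using (hu.cexp.const_mul ((coef y : ℂ)))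
    have hder := hasDerivAt_integral_of_dominated_loc_of_deriv_le (Metric.ball_mem_nhds z₀ zero_lt_one)
      (Filter.Eventually.of_forall fun z => hF_meas z) hF_int hF'_meas h_bound
      hbound_int h_diff
    exact hder.2.differentiableAt
  -- G is analytic on ℂ, vanishes on a real segment, hence everywhere
  have hGan : AnalyticOnNhd ℂ G Set.univ := fun z _ => hGdiff.analyticAt z
  set δ : ℝ := ε / (‖v‖ + 1) with hδdef
  have hδ : 0 < δ := div_pos hε (by positivity)
  have hzG : ∀ t : ℝ, |t| < δ → G (t : ℂ) = 0 := by
    intro t ht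
    have hmem : μ₀ + t • v ∈ Sop := by
      apply hball
      rw [Metric.mem_ball, dist_eq_norm]
      have hsm : μ₀ + t • v - μ₀ = t • v := by abel
      rw [hsm, norm_smul, Real.norm_eq_abs]
      calc |t| * ‖v‖ ≤ |t| * (‖v‖ + 1) := by nlinarith [abs_nonneg t, norm_nonneg v]
        _ < δ * (‖v‖ + 1) := mul_lt_mul_of_pos_right ht (by positivity)
        _ = ε := by rw [hδdef]; field_simp
    rw [hG_real t, hzero _ hmem, Complex.ofReal_zero]
  have hfreq : ∃ᶠ z in nhdsWithin (0:ℂ) {(0:ℂ)}ᶜ, G z = 0 := by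
    rw [Filter.frequently_iff]
    intro Uset hU
    rw [Metric.mem_nhdsWithin_iff] at hU
    obtain ⟨r, hr, hsub⟩ := hU
    refine ⟨((min δ r) / 2 : ℝ), hsub ⟨?_, ?_⟩, ?_⟩
    · rw [Metric.mem_ball, dist_zero_right, Complex.norm_real, Real.norm_eq_abs,
        abs_of_pos (by positivity)]
      have h1 := min_le_right δ r
      linarith
    · simp only [Set.mem_compl_iff, Set.mem_singleton_iff, Complex.ofReal_eq_zero]
      have h2 := lt_min hδ hr
      intro h
      linarith
    · apply hzG
      rw [abs_of_pos (by positivity)]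
      have h1 := min_le_left δ r
      linarith
  have hEq : Set.EqOn G 0 Set.univ :=
    hGan.eqOn_zero_of_preconnected_of_frequently_eq_zero isPreconnected_univ
      (Set.mem_univ 0) hfreq
  have h1 : G ((1:ℝ) : ℂ) = 0 := hEq (Set.mem_univ _)
  rw [hG_real 1] at h1
  have h2 : μ₀ + (1:ℝ) • v = μstar := by
    rw [one_smul, hvdef]; abel
  rw [h2] at h1
  exact_mod_cast h1

lemma gaussPdf_nonneg {n : ℕ} (S : Matrix (Fin n) (Fin n) ℝ) (μ y : Fin n → ℝ) :
    0 ≤ gaussPdf n S μ y :=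
  mul_nonneg (inv_nonneg.2 (Real.sqrt_nonneg _)) (Real.exp_pos _).le

lemma gaussPdf_meas {n : ℕ} (S : Matrix (Fin n) (Fin n) ℝ) (μ : Fin n → ℝ) :
    Measurable (gaussPdf n S μ) :=
  measurable_const.mul (Real.measurable_exp.comp
    (measurable_const.mul (continuous_quad_shift S⁻¹ μ).measurable))

lemma integral_gaussMeasure {n : ℕ} (S : Matrix (Fin n) (Fin n) ℝ) (μ : Fin n → ℝ)
    (g : (Fin n → ℝ) → ℝ) :
    (∫ y, g y ∂gaussMeasure n S μ) = ∫ y, gaussPdf n S μ y * g y := by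
  rw [gaussMeasure]
  have h1 : (fun y => ENNReal.ofReal (gaussPdf n S μ y))
      = fun y => ((gaussPdf n S μ y).toNNReal : ENNReal) := rfl
  rw [h1, integral_withDensity_eq_integral_smul (gaussPdf_meas S μ).real_toNNReal]
  congr 1
  funext y
  rw [NNReal.smul_def, Real.coe_toNNReal _ (gaussPdf_nonneg S μ y), smul_eq_mul]

lemma gaussPdf_integrable {n : ℕ} (hn : 1 ≤ n) (S : Matrix (Fin n) (Fin n) ℝ)
    (hS : S.PosDef) (μ : Fin n → ℝ) : Integrable (gaussPdf n S μ) := by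
  obtain ⟨α, hα, hquad⟩ := quad_lower hn S⁻¹ hS.inv
  set c0 : ℝ := (Real.sqrt ((2 * Real.pi) ^ n * S.det))⁻¹ with hc0def
  have hc0 : 0 ≤ c0 := by positivity
  have hΦ := prod_integrable (n := n) (half_pos hα) (fun _ => 0) (fun _ => le_refl 0) μ
  have hcont : Continuous (gaussPdf n S μ) := by
    apply continuous_const.mul
    exact Real.continuous_exp.comp (continuous_const.mul (continuous_quad_shift S⁻¹ μ))
  apply (hΦ.const_mul c0).mono' hcont.aestronglyMeasurable
  filter_upwards with y
  rw [Real.norm_eq_abs, abs_of_nonneg (gaussPdf_nonneg S μ y)]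
  have hProd : ∀ i : Fin n, ((1:ℝ) + 0 * |y i - μ i|) *
      Real.exp (-(α/2) * (y i - μ i) ^ 2 + 0 * |y i - μ i|)
      = Real.exp (-(α/2) * (y i - μ i) ^ 2) := by
    intro i; norm_num
  have hq : α * ∑ i, (y i - μ i) ^ 2 ≤ (y - μ) ⬝ᵥ (S⁻¹ *ᵥ (y - μ)) := by
    have h := hquad (y - μ)
    simpa [Pi.sub_apply] using h
  calc gaussPdf n S μ y
      = c0 * Real.exp (-(1/2) * ((y - μ) ⬝ᵥ (S⁻¹ *ᵥ (y - μ)))) := by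
        rw [gaussPdf, ← hc0def]
    _ ≤ c0 * Real.exp (∑ i, -(α/2) * (y i - μ i) ^ 2) := by
        apply mul_le_mul_of_nonneg_left _ hc0
        apply Real.exp_le_exp.2
        have hss : ∑ i, -(α/2) * (y i - μ i) ^ 2
            = -(1/2) * (α * ∑ i, (y i - μ i) ^ 2) := by
          simp only [Finset.mul_sum]
          exact Finset.sum_congr rfl fun i _ => by ring
        rw [hss]
        nlinarith
    _ = c0 * ∏ i, ((1:ℝ) + 0 * |y i - μ i|) *
          Real.exp (-(α/2) * (y i - μ i) ^ 2 + 0 * |y i - μ i|) := by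
        rw [Real.exp_sum]
        congr 1
        exact (Finset.prod_congr rfl fun i _ => hProd i).symm

lemma mul_pdf_integrable {n : ℕ} (hn : 1 ≤ n) (S : Matrix (Fin n) (Fin n) ℝ)
    (hS : S.PosDef) (μ : Fin n → ℝ) (d : (Fin n → ℝ) → ℝ) (hd : IsRule n d) :
    Integrable (fun y => gaussPdf n S μ y * d y) := by
  apply (gaussPdf_integrable hn S hS μ).mono'
    ((gaussPdf_meas S μ).mul hd.1).aestronglyMeasurable
  filter_upwards with y
  rw [Real.norm_eq_abs, Pi.mul_apply, abs_mul, abs_of_nonneg (gaussPdf_nonneg S μ y)]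
  obtain ⟨h0, h1⟩ := hd.2 y
  calc gaussPdf n S μ y * |d y| ≤ gaussPdf n S μ y * 1 := by
        apply mul_le_mul_of_nonneg_left _ (gaussPdf_nonneg S μ y)
        rw [abs_of_nonneg h0]; exact h1
    _ = gaussPdf n S μ y := mul_one _

end EIA

/-- **Theorem 1 (everything is admissible).** If the treatment choice problem with
Gaussian data `Y ~ N(m(θ), Σ)` exhibits nontrivial partial identification, then every
decision rule is welfare-admissible: no rule `d'` weakly dominates `d` everywhere in
terms of expected welfare contrast `U(θ)·E_{m(θ)}[d(Y)]` while strictly dominating it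
somewhere. -/
theorem everything_is_admissible
    (n : ℕ) (hn : 1 ≤ n) (Θ : Type*) [Nonempty Θ]
    (W0 W1 : Θ → ℝ) (U : Θ → ℝ) (hU : ∀ θ, U θ = W1 θ - W0 θ)
    (m : Θ → Fin n → ℝ)
    (S : Matrix (Fin n) (Fin n) ℝ) (hS : S.PosDef)
    (hPI : ∃ Sop : Set (Fin n → ℝ), Sop.Nonempty ∧ IsOpen Sop ∧
      ∀ μ ∈ Sop, (∃ θ, m θ = μ ∧ U θ < 0) ∧ (∃ θ, m θ = μ ∧ 0 < U θ))
    (d : (Fin n → ℝ) → ℝ) (hd : IsRule n d) :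
    ¬ ∃ d' : (Fin n → ℝ) → ℝ, IsRule n d' ∧
      (∀ θ : Θ, U θ * ∫ y, d y ∂ gaussMeasure n S (m θ)
          ≤ U θ * ∫ y, d' y ∂ gaussMeasure n S (m θ)) ∧
      (∃ θ : Θ, U θ * ∫ y, d y ∂ gaussMeasure n S (m θ)
          < U θ * ∫ y, d' y ∂ gaussMeasure n S (m θ)) := by
  rintro ⟨d', hd', hweak, θs, hstrict⟩
  obtain ⟨Sop, hSne, hSop, hPI'⟩ := hPI
  set H : (Fin n → ℝ) → ℝ := fun y => d' y - d y with hHdef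
  have hH : Measurable H := hd'.1.sub hd.1
  have hHb : ∀ y, |H y| ≤ 1 := by
    intro y
    obtain ⟨h0, h1⟩ := hd.2 y
    obtain ⟨h0', h1'⟩ := hd'.2 y
    rw [abs_le]
    constructor <;> simp only [hHdef] <;> linarith
  have hI : ∀ μ : Fin n → ℝ, (∫ y, H y * gaussPdf n S μ y)
      = (∫ y, d' y ∂gaussMeasure n S μ) - ∫ y, d y ∂gaussMeasure n S μ := by
    intro μ
    rw [EIA.integral_gaussMeasure S μ d', EIA.integral_gaussMeasure S μ d,
      ← integral_sub (EIA.mul_pdf_integrable hn S hS μ d' hd')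
        (EIA.mul_pdf_integrable hn S hS μ d hd)]
    congr 1
    funext y
    simp only [hHdef]
    ring
  have hzero : ∀ μ ∈ Sop, (∫ y, H y * gaussPdf n S μ y) = 0 := by
    intro μ hμ
    obtain ⟨⟨θm, hθm, hUm⟩, ⟨θp, hθp, hUp⟩⟩ := hPI' μ hμ
    have h1 : ∫ y, d y ∂gaussMeasure n S μ ≤ ∫ y, d' y ∂gaussMeasure n S μ := by
      have h := hweak θp
      rw [hθp] at h
      exact le_of_mul_le_mul_left h hUp
    have h2 : ∫ y, d' y ∂gaussMeasure n S μ ≤ ∫ y, d y ∂gaussMeasure n S μ := by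
      have h3 := hweak θm
      rw [hθm] at h3
      nlinarith
    rw [hI μ]
    linarith
  have hstar := EIA.gauss_integral_zero_everywhere hn S hS H hH hHb hSne hSop hzero (m θs)
  rw [hI (m θs), sub_eq_zero] at hstar
  rw [hstar] at hstrict
  exact lt_irrefl _ hstrict
end
end

section
/- Suppose there exists θ ∈ Θ with U(θ) ≤ 0, and that inf_{θ∈Θ} W₀(θ) = inf_{θ∈Θ : U(θ)≤0} W₀(θ) (infima taken in the extended reals). Then the no-data rule d ≡ 0 is maximin-welfare optimal: sup over all decision rules d of inf_{θ∈Θ} E_{m(θ)}[W₀(θ) + U(θ)·d(Y)] equals inf_{θ∈Θ} E_{m(θ)}[W₀(θ) + U(θ)·0] = inf_{θ∈Θ} W₀(θ). -/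
open MeasureTheory Matrix Set

noncomputable section

open Real in
lemma quad_measurable (n : ℕ) (M : Matrix (Fin n) (Fin n) ℝ) :
    Measurable fun y : Fin n → ℝ => ENNReal.ofReal (rexp (-(1/2) * (y ⬝ᵥ M *ᵥ y))) := by
  have hc : Continuous fun y : Fin n → ℝ => y ⬝ᵥ M *ᵥ y := by
    simp only [dotProduct, Matrix.mulVec]
    fun_prop
  exact (Real.continuous_exp.comp ((continuous_const.mul hc))).measurable.ennreal_ofReal

open Real in
lemma std_gauss_lintegral (n : ℕ) :
    ∫⁻ x : Fin n → ℝ, ENNReal.ofReal (rexp (-(1/2) * (x ⬝ᵥ x)))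
      = ENNReal.ofReal ((2 * π) ^ ((n : ℝ)/2)) := by
  have φmp := EuclideanSpace.volume_preserving_symm_measurableEquiv_toLp (Fin n)
  have hmeas : Measurable fun x : Fin n → ℝ => ENNReal.ofReal (rexp (-(1/2) * (x ⬝ᵥ x))) := by
    have hc : Continuous fun y : Fin n → ℝ => y ⬝ᵥ y := by
      simp only [dotProduct]; fun_prop
    exact (Real.continuous_exp.comp ((continuous_const.mul hc))).measurable.ennreal_ofReal
  rw [← φmp.lintegral_comp hmeas]
  have hnorm : ∀ v : EuclideanSpace ℝ (Fin n),
      (MeasurableEquiv.toLp 2 (Fin n → ℝ)).symm v ⬝ᵥ (MeasurableEquiv.toLp 2 (Fin n → ℝ)).symm v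
        = ‖v‖ ^ 2 := by
    intro v
    rw [EuclideanSpace.norm_eq, Real.sq_sqrt (Finset.sum_nonneg fun i _ => sq_nonneg _)]
    simp [dotProduct, sq]
  have hInt : Integrable (fun v : EuclideanSpace ℝ (Fin n) => rexp (-(1/2) * ‖v‖ ^ 2)) := by
    have h := (GaussianFourier.integrable_cexp_neg_mul_sq_norm_add
      (V := EuclideanSpace ℝ (Fin n)) (b := (1/2 : ℂ)) (by norm_num) 0 0).norm
    convert h using 2 with v
    rw [Complex.norm_exp]
    norm_num
    simp [← Complex.ofReal_pow]
  calc ∫⁻ v : EuclideanSpace ℝ (Fin n), ENNReal.ofReal (rexp (-(1/2) *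
        ((MeasurableEquiv.toLp 2 (Fin n → ℝ)).symm v ⬝ᵥ (MeasurableEquiv.toLp 2 (Fin n → ℝ)).symm v)))
      = ∫⁻ v : EuclideanSpace ℝ (Fin n), ENNReal.ofReal (rexp (-(1/2) * ‖v‖ ^ 2)) := by
        simp_rw [hnorm]
    _ = ENNReal.ofReal (∫ v : EuclideanSpace ℝ (Fin n), rexp (-(1/2) * ‖v‖ ^ 2)) :=
        (ofReal_integral_eq_lintegral_ofReal hInt (ae_of_all _ fun v => (Real.exp_pos _).le)).symm
    _ = ENNReal.ofReal ((2 * π) ^ ((n : ℝ)/2)) := by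
        rw [GaussianFourier.integral_rexp_neg_mul_sq_norm (by norm_num : (0:ℝ) < 1/2),
          show (π/(1/2:ℝ)) = 2*π by ring, finrank_euclideanSpace_fin]

open Real MatrixOrder in
lemma gaussMeasure_isProbability (n : ℕ) (S : Matrix (Fin n) (Fin n) ℝ) (hS : S.PosDef)
    (μ0 : Fin n → ℝ) : IsProbabilityMeasure (gaussMeasure n S μ0) := by
  -- matrix preliminaries
  set Q := CFC.sqrt S with hQdef
  have hQQ : Q * Q = S := CFC.sqrt_mul_sqrt_self S hS.posSemidef.nonneg
  have hQsd : Q.PosSemidef := (CFC.sqrt_nonneg S).posSemidef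
  have hdetS : 0 < S.det := hS.det_pos
  have hdetQ : 0 ≤ Q.det := by
    rw [hQsd.1.det_eq_prod_eigenvalues]
    exact Finset.prod_nonneg fun i _ => hQsd.eigenvalues_nonneg i
  have hsq : Q.det * Q.det = S.det := by rw [← det_mul, hQQ]
  have hdetQpos : 0 < Q.det := by
    rcases hdetQ.lt_or_eq with h | h
    · exact h
    · exfalso; rw [← h] at hsq; simp at hsq; linarith [hsq ▸ hdetS]
  have hQT : Qᵀ = Q := by
    have := hQsd.1
    rwa [Matrix.IsHermitian, conjTranspose_eq_transpose_of_trivial] at this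
  have hmid : Q * S⁻¹ * Q = 1 := by
    have hu : IsUnit Q.det := hdetQpos.ne'.isUnit
    rw [← hQQ, Matrix.mul_inv_rev]
    calc Q * (Q⁻¹ * Q⁻¹) * Q = (Q * Q⁻¹) * (Q⁻¹ * Q) := by
          simp only [mul_assoc]
      _ = 1 := by rw [Matrix.mul_nonsing_inv _ hu, Matrix.nonsing_inv_mul _ hu, one_mul]
  have hquad : ∀ x : Fin n → ℝ, (Q *ᵥ x) ⬝ᵥ (S⁻¹ *ᵥ (Q *ᵥ x)) = x ⬝ᵥ x := by
    intro x
    have h1 : Q *ᵥ x = x ᵥ* Q := by conv_lhs => rw [← hQT, Matrix.mulVec_transpose]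
    rw [mulVec_mulVec, h1, dotProduct_mulVec, vecMul_vecMul, ← mul_assoc, hmid, vecMul_one]
  -- normalization constant
  set c : ℝ := Real.sqrt ((2 * π) ^ n * S.det) with hc
  have h2pi : (0:ℝ) < 2 * π := by positivity
  have hcval : c = (2 * π) ^ ((n:ℝ)/2) * Q.det := by
    rw [hc, Real.sqrt_mul (by positivity), show S.det = Q.det ^ 2 by rw [sq, hsq],
      Real.sqrt_sq_eq_abs, abs_of_pos hdetQpos, ← Real.rpow_natCast (2*π) n,
      Real.sqrt_eq_rpow, ← Real.rpow_mul h2pi.le, mul_one_div]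
  have hcpos : 0 < c := by rw [hcval]; positivity
  -- the quadratic exponential integrand
  set g0 : (Fin n → ℝ) → ENNReal :=
    fun y => ENNReal.ofReal (rexp (-(1/2) * (y ⬝ᵥ S⁻¹ *ᵥ y))) with hg0def
  have hg0 : Measurable g0 := quad_measurable n S⁻¹
  -- change of variables
  have hdetlin : LinearMap.det (Matrix.toLin' Q) = Q.det := by
    rw [LinearMap.det_toLin']
  have hmap : Measure.map (Matrix.toLin' Q) volume
      = ENNReal.ofReal |Q.det⁻¹| • volume := by
    rw [← hdetlin]
    exact Real.map_linearMap_volume_pi_eq_smul_volume_pi (by rw [hdetlin]; exact hdetQpos.ne')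
  have hfmeas : Measurable (Matrix.toLin' Q) :=
    (LinearMap.continuous_on_pi _).measurable
  have e1 : ∫⁻ x, g0 (Matrix.toLin' Q x) ∂volume
      = ENNReal.ofReal |Q.det⁻¹| * ∫⁻ y, g0 y ∂volume := by
    rw [← lintegral_map hg0 hfmeas, hmap, lintegral_smul_measure, smul_eq_mul]
  have e2 : ∫⁻ x, g0 (Matrix.toLin' Q x) ∂volume
      = ENNReal.ofReal ((2 * π) ^ ((n : ℝ)/2)) := by
    rw [← std_gauss_lintegral n]
    congr 1 with x
    rw [hg0def]
    simp only [Matrix.toLin'_apply, hquad x]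
  -- E0
  have hE0 : ∫⁻ y, g0 y ∂volume = ENNReal.ofReal Q.det * ENNReal.ofReal ((2 * π) ^ ((n : ℝ)/2)) := by
    rw [← e2, e1, ← mul_assoc, ← ENNReal.ofReal_mul hdetQ, abs_of_pos (by positivity),
      mul_inv_cancel₀ hdetQpos.ne', ENNReal.ofReal_one, one_mul]
  -- total mass
  constructor
  rw [gaussMeasure, withDensity_apply _ MeasurableSet.univ, Measure.restrict_univ]
  have htrans : ∀ y : Fin n → ℝ, ENNReal.ofReal (gaussPdf n S μ0 y)
      = ENNReal.ofReal c⁻¹ * g0 (y + (-μ0)) := by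
    intro y
    rw [hg0def, gaussPdf, ENNReal.ofReal_mul (by positivity)]
    congr 3
  calc ∫⁻ y, ENNReal.ofReal (gaussPdf n S μ0 y)
      = ∫⁻ y, ENNReal.ofReal c⁻¹ * g0 (y + (-μ0)) := by simp_rw [htrans]
    _ = ENNReal.ofReal c⁻¹ * ∫⁻ y, g0 (y + (-μ0)) :=
        lintegral_const_mul' _ _ ENNReal.ofReal_ne_top
    _ = ENNReal.ofReal c⁻¹ * ∫⁻ y, g0 y := by
        rw [lintegral_add_right_eq_self g0 (-μ0)]
    _ = 1 := by
        rw [hE0, ← mul_assoc, ← ENNReal.ofReal_mul (by positivity),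
          ← ENNReal.ofReal_mul (by positivity), hcval]
        rw [show ((2 * π) ^ ((n:ℝ)/2) * Q.det)⁻¹ * Q.det * (2 * π) ^ ((n:ℝ)/2) = 1 by
          field_simp]
        exact ENNReal.ofReal_one

/-- **Theorem 2 (maximin welfare is ultra-pessimistic).** If some `θ` has `U(θ) ≤ 0` and
`inf_{θ∈Θ} W₀(θ) = inf_{θ : U(θ)≤0} W₀(θ)` (infima in the extended reals), then the
no-data rule `d ≡ 0` is maximin-welfare optimal: the supremum over all decision rules of
the infimum (over `θ`) of expected welfare `E_{m(θ)}[W₀(θ) + U(θ)·d(Y)]` equals the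
infimum of expected welfare of the zero rule, which is `inf_{θ∈Θ} W₀(θ)`. -/
theorem maximin_no_data
    (n : ℕ) (hn : 1 ≤ n) (Θ : Type*) [Nonempty Θ]
    (W0 W1 : Θ → ℝ) (U : Θ → ℝ) (hU : ∀ θ, U θ = W1 θ - W0 θ)
    (m : Θ → Fin n → ℝ)
    (S : Matrix (Fin n) (Fin n) ℝ) (hS : S.PosDef)
    (hU0 : ∃ θ, U θ ≤ 0)
    (hinf : sInf (Set.range fun θ => ((W0 θ : ℝ) : EReal)) =
      sInf ((fun θ => ((W0 θ : ℝ) : EReal)) '' {θ | U θ ≤ 0})) :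
    sSup {v : EReal | ∃ d : (Fin n → ℝ) → ℝ, IsRule n d ∧
        v = sInf (Set.range fun θ =>
          ((∫ y, (W0 θ + U θ * d y) ∂ gaussMeasure n S (m θ) : ℝ) : EReal))}
      = sInf (Set.range fun θ => ((W0 θ : ℝ) : EReal)) ∧
    sInf (Set.range fun θ =>
        ((∫ y, (W0 θ + U θ * (0 : ℝ)) ∂ gaussMeasure n S (m θ) : ℝ) : EReal))
      = sInf (Set.range fun θ => ((W0 θ : ℝ) : EReal)) := by
  have hprob : ∀ θ : Θ, IsProbabilityMeasure (gaussMeasure n S (m θ)) :=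
    fun θ => gaussMeasure_isProbability n S hS (m θ)
  have hzero : ∀ θ : Θ, (∫ y, (W0 θ + U θ * (0:ℝ)) ∂ gaussMeasure n S (m θ)) = W0 θ := by
    intro θ
    have := hprob θ
    simp [integral_const]
  have hsecond : sInf (Set.range fun θ =>
      ((∫ y, (W0 θ + U θ * (0 : ℝ)) ∂ gaussMeasure n S (m θ) : ℝ) : EReal))
      = sInf (Set.range fun θ => ((W0 θ : ℝ) : EReal)) := by
    simp only [hzero]
  refine ⟨le_antisymm ?_ ?_, hsecond⟩
  · refine sSup_le ?_
    rintro v ⟨d, ⟨hdm, hdb⟩, rfl⟩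
    rw [hinf]
    refine le_sInf ?_
    rintro b ⟨θ, hθ, rfl⟩
    have := hprob θ
    have hdint : Integrable d (gaussMeasure n S (m θ)) := by
      refine (integrable_const (1:ℝ)).mono' hdm.aestronglyMeasurable (ae_of_all _ fun y => ?_)
      rw [Real.norm_eq_abs, abs_of_nonneg (hdb y).1]
      exact (hdb y).2
    have hI0 : 0 ≤ ∫ y, d y ∂ gaussMeasure n S (m θ) :=
      integral_nonneg fun y => (hdb y).1
    have hle : (∫ y, (W0 θ + U θ * d y) ∂ gaussMeasure n S (m θ)) ≤ W0 θ := by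
      rw [integral_add (integrable_const _) (hdint.const_mul _), integral_const,
        MeasureTheory.integral_const_mul]
      simp only [probReal_univ, measure_univ, ENNReal.toReal_one, one_smul]
      nlinarith [mul_nonneg (neg_nonneg.2 (hθ : U θ ≤ 0)) hI0]
    calc sInf (Set.range fun θ' =>
          ((∫ y, (W0 θ' + U θ' * d y) ∂ gaussMeasure n S (m θ') : ℝ) : EReal))
        ≤ ((∫ y, (W0 θ + U θ * d y) ∂ gaussMeasure n S (m θ) : ℝ) : EReal) :=
          sInf_le (mem_range_self θ)
      _ ≤ ((W0 θ : ℝ) : EReal) := EReal.coe_le_coe_iff.2 hle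
  · refine le_sSup ⟨fun _ => (0:ℝ), ⟨measurable_const, fun y => ?_⟩, ?_⟩
    · exact Set.mem_Icc.mpr ⟨le_refl 0, zero_le_one⟩
    · exact hsecond.symm
end
end

section
/- Let (𝒴, 𝒜) be a measurable space, Θ a nonempty set, U : Θ → ℝ, m : Θ → ℝⁿ, and for each θ ∈ Θ let P_{m(θ)} be a probability measure on (𝒴, 𝒜) that depends on θ only through m(θ). Suppose: (PI) there is a nonempty open set S ⊆ ℝⁿ such that for every μ ∈ S there exist θ⁻, θ⁺ ∈ Θ with m(θ⁻) = m(θ⁺) = μ and U(θ⁻) < 0 < U(θ⁺); (A1) the family {P_{m(θ)} : θ ∈ m⁻¹(S)} is boundedly complete, i.e., every bounded measurable f : 𝒴 → ℝ with ∫ f dP_{m(θ)} = 0 for all θ ∈ m⁻¹(S) satisfies f = 0 P_{m(θ)}-almost everywhere for every θ ∈ m⁻¹(S); (A2) every set E ∈ 𝒜 with P_{m(θ)}(E) = 0 for all θ ∈ m⁻¹(S) also satisfies P_{m(θ)}(E) = 0 for all θ ∈ Θ. Then every decision rule d : 𝒴 → [0,1] is welfare-admissible: there is no measurable d′ : 𝒴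 → [0,1] with U(θ)·∫ d′ dP_{m(θ)} ≥ U(θ)·∫ d dP_{m(θ)} for all θ ∈ Θ and strict inequality for some θ ∈ Θ. -/
open MeasureTheory Set

noncomputable section

/-- **Theorem (general admissibility under bounded completeness).**
Let `P μ` be a statistical model on a measurable space `Y` indexed by the reduced-form
parameter `μ = m(θ)`. Under nontrivial partial identification (PI), bounded completeness
of the family `{P (m θ) : m θ ∈ S}` (A1), and the absolute-continuity condition (A2),
every decision rule `d : Y → [0,1]` is welfare-admissible. -/
theorem general_admissibility
    (n : ℕ) (Y : Type*) [MeasurableSpace Y] (Θ : Type*) [Nonempty Θ]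
    (U : Θ → ℝ) (m : Θ → Fin n → ℝ)
    (P : (Fin n → ℝ) → Measure Y) (hP : ∀ θ : Θ, IsProbabilityMeasure (P (m θ)))
    (S : Set (Fin n → ℝ)) (hSne : S.Nonempty) (hSopen : IsOpen S)
    -- (PI): nontrivial partial identification on `S`
    (hPI : ∀ μ ∈ S, (∃ θ, m θ = μ ∧ U θ < 0) ∧ (∃ θ, m θ = μ ∧ 0 < U θ))
    -- (A1): bounded completeness of the subfamily indexed by `m⁻¹(S)`
    (hBC : ∀ f : Y → ℝ, Measurable f → (∃ C : ℝ, ∀ y, |f y| ≤ C) →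
      (∀ θ : Θ, m θ ∈ S → ∫ y, f y ∂ P (m θ) = 0) →
      ∀ θ : Θ, m θ ∈ S → f =ᵐ[P (m θ)] 0)
    -- (A2): common null sets extend from the subfamily to the whole family
    (hAC : ∀ E : Set Y, MeasurableSet E →
      (∀ θ : Θ, m θ ∈ S → P (m θ) E = 0) → ∀ θ : Θ, P (m θ) E = 0)
    (d : Y → ℝ) (hd : Measurable d ∧ ∀ y, d y ∈ Set.Icc (0 : ℝ) 1) :
    ¬ ∃ d' : Y → ℝ, (Measurable d' ∧ ∀ y, d' y ∈ Set.Icc (0 : ℝ) 1) ∧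
      (∀ θ : Θ, U θ * ∫ y, d y ∂ P (m θ) ≤ U θ * ∫ y, d' y ∂ P (m θ)) ∧
      (∃ θ : Θ, U θ * ∫ y, d y ∂ P (m θ) < U θ * ∫ y, d' y ∂ P (m θ)) := by
  rintro ⟨d', ⟨hd'm, hd'b⟩, hweak, θ₀, hstrict⟩
  have hdm := hd.1
  have hdb := hd.2
  -- integrability of bounded measurable functions under each P (m θ)
  have hint : ∀ (θ : Θ) (g : Y → ℝ), Measurable g → (∀ y, g y ∈ Set.Icc (0:ℝ) 1) →
      Integrable g (P (m θ)) := by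
    intro θ g hg hgb
    haveI := hP θ
    refine ⟨hg.aestronglyMeasurable, ?_⟩
    apply HasFiniteIntegral.of_bounded (C := 1)
    filter_upwards with y
    rw [Real.norm_eq_abs, abs_le]
    exact ⟨by linarith [(hgb y).1], (hgb y).2⟩
  -- ∫ (d' - d) = 0 on m⁻¹(S)
  have hzero : ∀ θ : Θ, m θ ∈ S → ∫ y, (d' y - d y) ∂ P (m θ) = 0 := by
    intro θ hθ
    obtain ⟨⟨θn, hmn, hUn⟩, ⟨θp, hmp, hUp⟩⟩ := hPI (m θ) hθ
    have h1 : ∫ y, d y ∂ P (m θ) ≤ ∫ y, d' y ∂ P (m θ) := by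
      have := hweak θp
      rw [hmp] at this
      exact le_of_mul_le_mul_left this hUp
    have h2 : ∫ y, d' y ∂ P (m θ) ≤ ∫ y, d y ∂ P (m θ) := by
      have := hweak θn
      rw [hmn] at this
      exact le_of_mul_le_mul_left (by linarith) (by linarith : (0:ℝ) < -U θn)
    rw [integral_sub (hint θ d' hd'm hd'b) (hint θ d hdm hdb)]
    linarith
  -- bounded completeness gives a.e. equality on m⁻¹(S)
  have hae : ∀ θ : Θ, m θ ∈ S → (fun y => d' y - d y) =ᵐ[P (m θ)] 0 := by
    apply hBC _ (hd'm.sub hdm) ⟨2, fun y => ?_⟩ hzero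
    have := (hd'b y); have := (hdb y)
    rw [abs_le]
    constructor <;> simp only [Set.mem_Icc, Pi.sub_apply] at * <;> linarith [this.1, this.2]
  -- the disagreement set is null for all θ by (A2)
  set E : Set Y := {y | d' y - d y ≠ 0} with hE
  have hEmeas : MeasurableSet E := (measurableSet_eq_fun (hd'm.sub hdm) measurable_const).compl
  have hEnull : ∀ θ : Θ, P (m θ) E = 0 := by
    apply hAC E hEmeas
    intro θ hθ
    exact hae θ hθ
  -- hence integrals agree everywhere, contradicting strictness
  have heq : ∫ y, d y ∂ P (m θ₀) = ∫ y, d' y ∂ P (m θ₀) := by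
    apply integral_congr_ae
    have : ∀ᵐ y ∂ P (m θ₀), d' y - d y = 0 := hEnull θ₀
    filter_upwards [this] with y hy
    linarith
  rw [heq] at hstrict
  exact lt_irrefl _ hstrict
end
end

section
/- Suppose the problem exhibits nontrivial partial identification and Assumption L holds, let w ∈ ℝⁿ be nonzero, and assume k̄_w(γ) is finite for every γ ∈ Γ_w. Then Γ_w is symmetric about 0 (γ ∈ Γ_w ⇒ −γ ∈ Γ_w), 0 lies in the interior of Γ_w, and the superdifferential ∂k̄_w(0) := {s ∈ ℝ : k̄_w(γ) ≤ k̄_w(0) + s·γ for all γ ∈ Γ_w} is nonempty, closed, and bounded. -/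
open Matrix Set

noncomputable section

/-- `Γ_w`, the image of `θ ↦ wᵀ m(θ)` over `Θ`. -/
def Gam {V : Type*} (n : ℕ) (m : V → Fin n → ℝ) (Θ : Set V) (w : Fin n → ℝ) : Set ℝ :=
  (fun θ => w ⬝ᵥ m θ) '' Θ

/-- `k̄_w(γ) = sup{U(θ) : θ ∈ Θ, wᵀ m(θ) = γ}`. -/
def kbar {V : Type*} (n : ℕ) (U : V → ℝ) (m : V → Fin n → ℝ) (Θ : Set V)
    (w : Fin n → ℝ) (γ : ℝ) : ℝ :=
  sSup (U '' {θ ∈ Θ | w ⬝ᵥ m θ = γ})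

/-- The superdifferential `∂k̄_w(0)` of `k̄_w` at `0`. -/
def superdiff {V : Type*} (n : ℕ) (U : V → ℝ) (m : V → Fin n → ℝ) (Θ : Set V)
    (w : Fin n → ℝ) : Set ℝ :=
  {s : ℝ | ∀ γ ∈ Gam n m Θ w, kbar n U m Θ w γ ≤ kbar n U m Θ w 0 + s * γ}

/-- Nontrivial partial identification. -/
def PartialId {V : Type*} (n : ℕ) (U : V → ℝ) (m : V → Fin n → ℝ) (Θ : Set V) : Prop :=
  ∃ Sop : Set (Fin n → ℝ), Sop.Nonempty ∧ IsOpen Sop ∧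
    ∀ μ ∈ Sop, (∃ θ ∈ Θ, m θ = μ ∧ U θ < 0) ∧ (∃ θ ∈ Θ, m θ = μ ∧ 0 < U θ)

/-- **Lemma (properties of the superdifferential).** Under nontrivial partial
identification and Assumption L, for a nonzero `w` with `k̄_w` finite on `Γ_w`: `Γ_w` is
symmetric about `0`, `0` lies in its interior, and `∂k̄_w(0)` is nonempty, closed, and
bounded. -/
theorem superdifferential_properties
    {V : Type*} [AddCommGroup V] [Module ℝ V]
    (n : ℕ)
    (Θ : Set V) (hΘne : Θ.Nonempty) (hΘconv : Convex ℝ Θ) (hΘsym : ∀ θ ∈ Θ, -θ ∈ Θ)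
    (Ul : V →ₗ[ℝ] ℝ) (ml : V →ₗ[ℝ] (Fin n → ℝ))
    (hPI : PartialId n ⇑Ul ⇑ml Θ)
    (w : Fin n → ℝ) (hw : w ≠ 0)
    (hbdd : ∀ γ ∈ Gam n ⇑ml Θ w, BddAbove (⇑Ul '' {θ ∈ Θ | w ⬝ᵥ ml θ = γ})) :
    (∀ γ ∈ Gam n ⇑ml Θ w, -γ ∈ Gam n ⇑ml Θ w) ∧
    (0 : ℝ) ∈ interior (Gam n ⇑ml Θ w) ∧
    (superdiff n ⇑Ul ⇑ml Θ w).Nonempty ∧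
    IsClosed (superdiff n ⇑Ul ⇑ml Θ w) ∧
    Bornology.IsBounded (superdiff n ⇑Ul ⇑ml Θ w) := by
  classical
  set f : ℝ → ℝ := kbar n ⇑Ul ⇑ml Θ w with hfdef
  set Γ : Set ℝ := Gam n ⇑ml Θ w with hΓdef
  have hmemΓ : ∀ γ : ℝ, γ ∈ Γ ↔ ∃ θ ∈ Θ, w ⬝ᵥ ml θ = γ := by
    intro γ; constructor
    · rintro ⟨θ, hθ, h⟩; exact ⟨θ, hθ, h⟩
    · rintro ⟨θ, hθ, h⟩; exact ⟨θ, hθ, h⟩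
  -- symmetry
  have hsym : ∀ γ ∈ Γ, -γ ∈ Γ := by
    intro γ hγ
    obtain ⟨θ, hθ, h⟩ := (hmemΓ γ).mp hγ
    refine (hmemΓ (-γ)).mpr ⟨-θ, hΘsym θ hθ, ?_⟩
    rw [map_neg, dotProduct_neg, h]
  -- the linear functional
  set Lw : (Fin n → ℝ) →ₗ[ℝ] ℝ :=
    { toFun := fun v => w ⬝ᵥ v
      map_add' := fun u v => dotProduct_add w u v
      map_smul' := fun c v => by simp [dotProduct_smul, smul_eq_mul] } with hLwdef
  have hΓconv : Convex ℝ Γ := by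
    have : Γ = (Lw.comp ml) '' Θ := rfl
    rw [this]
    exact hΘconv.linear_image (Lw.comp ml)
  -- interior
  obtain ⟨Sop, hSne, hSop, hSprop⟩ := hPI
  have hLc : Continuous Lw := LinearMap.continuous_of_finiteDimensional Lw
  have hsurj : Function.Surjective Lw := by
    obtain ⟨i, hi⟩ := Function.ne_iff.mp hw
    simp only [Pi.zero_apply] at hi
    intro r
    refine ⟨Pi.single i (r / w i), ?_⟩
    show w ⬝ᵥ Pi.single i (r / w i) = r
    rw [dotProduct_single]
    field_simp
  have hopen : IsOpen ((fun v => w ⬝ᵥ v) '' Sop) := by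
    have := (LinearMap.toContinuousLinearMap Lw).isOpenMap hsurj Sop hSop
    exact this
  have hsub : (fun v => w ⬝ᵥ v) '' Sop ⊆ Γ := by
    rintro γ ⟨μ, hμ, rfl⟩
    obtain ⟨θ, hθ, hmθ, _⟩ := (hSprop μ hμ).1
    exact (hmemΓ _).mpr ⟨θ, hθ, by rw [hmθ]⟩
  obtain ⟨μ₀, hμ₀⟩ := hSne
  set γ₀ : ℝ := w ⬝ᵥ μ₀ with hγ₀def
  have hγ₀int : γ₀ ∈ interior Γ :=
    interior_maximal hsub hopen ⟨μ₀, hμ₀, rfl⟩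
  have hγ₀mem : γ₀ ∈ Γ := interior_subset hγ₀int
  have h0int : (0 : ℝ) ∈ interior Γ := by
    have := hΓconv.combo_interior_self_mem_interior hγ₀int (hsym γ₀ hγ₀mem)
      (by norm_num : (0:ℝ) < 1/2) (by norm_num : (0:ℝ) ≤ 1/2) (by norm_num)
    simpa using this
  -- concavity of f on Γ
  have hconc : ∀ x ∈ Γ, ∀ y ∈ Γ, ∀ a b : ℝ, 0 ≤ a → 0 ≤ b → a + b = 1 →
      a * f x + b * f y ≤ f (a * x + b * y) := by
    intro x hx y hy a b ha hb hab
    obtain ⟨θx, hθx, hwx⟩ := (hmemΓ x).mp hx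
    obtain ⟨θy, hθy, hwy⟩ := (hmemΓ y).mp hy
    have hzΓ : a * x + b * y ∈ Γ := by
      refine (hmemΓ _).mpr ⟨a • θx + b • θy, hΘconv hθx hθy ha hb hab, ?_⟩
      rw [map_add, LinearMap.map_smul, LinearMap.map_smul, dotProduct_add, dotProduct_smul, dotProduct_smul,
        hwx, hwy, smul_eq_mul, smul_eq_mul]
    have hSxne : (⇑Ul '' {θ ∈ Θ | w ⬝ᵥ ml θ = x}).Nonempty := ⟨Ul θx, θx, ⟨hθx, hwx⟩, rfl⟩
    have hSyne : (⇑Ul '' {θ ∈ Θ | w ⬝ᵥ ml θ = y}).Nonempty := ⟨Ul θy, θy, ⟨hθy, hwy⟩, rfl⟩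
    refine le_of_forall_pos_le_add ?_
    intro ε hε
    obtain ⟨u, hu, hu'⟩ := exists_lt_of_lt_csSup hSxne
      (show f x - ε/2 < sSup (⇑Ul '' {θ ∈ Θ | w ⬝ᵥ ml θ = x}) by
        change f x - ε/2 < f x; linarith)
    obtain ⟨v, hv, hv'⟩ := exists_lt_of_lt_csSup hSyne
      (show f y - ε/2 < sSup (⇑Ul '' {θ ∈ Θ | w ⬝ᵥ ml θ = y}) by
        change f y - ε/2 < f y; linarith)
    obtain ⟨θu, ⟨hθu, hwu⟩, rfl⟩ := hu
    obtain ⟨θv, ⟨hθv, hwv⟩, rfl⟩ := hv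
    have hmemz : a * Ul θu + b * Ul θv ∈ ⇑Ul '' {θ ∈ Θ | w ⬝ᵥ ml θ = a * x + b * y} := by
      refine ⟨a • θu + b • θv, ⟨hΘconv hθu hθv ha hb hab, ?_⟩, ?_⟩
      · rw [map_add, LinearMap.map_smul, LinearMap.map_smul, dotProduct_add, dotProduct_smul, dotProduct_smul,
          hwu, hwv, smul_eq_mul, smul_eq_mul]
      · rw [map_add, LinearMap.map_smul, LinearMap.map_smul, smul_eq_mul, smul_eq_mul]
    have hle : a * Ul θu + b * Ul θv ≤ f (a * x + b * y) :=
      le_csSup (hbdd _ hzΓ) hmemz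
    nlinarith [mul_le_mul_of_nonneg_left (le_of_lt hu') ha,
      mul_le_mul_of_nonneg_left (le_of_lt hv') hb]
  -- slope inequality
  have hslope : ∀ γ₁ ∈ Γ, ∀ γ₂ ∈ Γ, γ₁ < 0 → 0 < γ₂ →
      (f γ₂ - f 0) / γ₂ ≤ (f γ₁ - f 0) / γ₁ := by
    intro γ₁ h1 γ₂ h2 hn hp
    have hd : (0:ℝ) < γ₂ - γ₁ := by linarith
    have hd' : (γ₂ - γ₁) ≠ 0 := ne_of_gt hd
    have ha : (0:ℝ) ≤ γ₂ / (γ₂ - γ₁) := by positivity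
    have hb : (0:ℝ) ≤ -γ₁ / (γ₂ - γ₁) := by
      apply div_nonneg (by linarith) (le_of_lt hd)
    have hab : γ₂ / (γ₂ - γ₁) + -γ₁ / (γ₂ - γ₁) = 1 := by field_simp; ring
    have hcombo : γ₂ / (γ₂ - γ₁) * γ₁ + -γ₁ / (γ₂ - γ₁) * γ₂ = 0 := by
      field_simp; ring
    have hc := hconc γ₁ h1 γ₂ h2 _ _ ha hb hab
    rw [hcombo] at hc
    -- hc : γ₂/(γ₂-γ₁) * f γ₁ + -γ₁/(γ₂-γ₁) * f γ₂ ≤ f 0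
    have hkey : γ₂ * f γ₁ - γ₁ * f γ₂ ≤ (γ₂ - γ₁) * f 0 := by
      have h' : (γ₂ * f γ₁ - γ₁ * f γ₂) / (γ₂ - γ₁) ≤ f 0 := by
        have : (γ₂ * f γ₁ - γ₁ * f γ₂) / (γ₂ - γ₁)
            = γ₂ / (γ₂ - γ₁) * f γ₁ + -γ₁ / (γ₂ - γ₁) * f γ₂ := by
          field_simp; ring
        rw [this]; exact hc
      calc γ₂ * f γ₁ - γ₁ * f γ₂ = (γ₂ * f γ₁ - γ₁ * f γ₂) / (γ₂ - γ₁) * (γ₂ - γ₁) := by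
            field_simp
        _ ≤ f 0 * (γ₂ - γ₁) := mul_le_mul_of_nonneg_right h' (le_of_lt hd)
        _ = (γ₂ - γ₁) * f 0 := by ring
    have hrw : (f γ₁ - f 0) / γ₁ = (f 0 - f γ₁) / (-γ₁) := by
      rw [div_neg, ← neg_div, neg_sub]
    rw [hrw, div_le_div_iff₀ hp (by linarith : (0:ℝ) < -γ₁)]
    nlinarith [hkey]
  -- get a small ε with ±ε ∈ Γ
  obtain ⟨ε, hε, hball⟩ := Metric.mem_nhds_iff.mp (mem_interior_iff_mem_nhds.mp h0int)
  have hεmem : ε / 2 ∈ Γ := hball (by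
    simp [Real.ball_eq_Ioo]; constructor <;> linarith)
  have hεneg : -(ε / 2) ∈ Γ := hsym _ hεmem
  have hε2 : (0:ℝ) < ε / 2 := by linarith
  -- the set of positive slopes
  set Sp : Set ℝ := {r | ∃ γ ∈ Γ, 0 < γ ∧ r = (f γ - f 0) / γ} with hSpdef
  have hSpne : Sp.Nonempty := ⟨(f (ε/2) - f 0) / (ε/2), ε/2, hεmem, hε2, rfl⟩
  have hSpub : (f (-(ε/2)) - f 0) / (-(ε/2)) ∈ upperBounds Sp := by
    rintro r ⟨γ, hγ, hγpos, rfl⟩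
    exact hslope _ hεneg _ hγ (by linarith) hγpos
  have hSpbdd : BddAbove Sp := ⟨_, hSpub⟩
  set s₀ : ℝ := sSup Sp with hs₀def
  have hs₀mem : s₀ ∈ superdiff n ⇑Ul ⇑ml Θ w := by
    intro γ hγ
    rcases lt_trichotomy γ 0 with hneg | hzero | hpos
    · have hub : (f γ - f 0) / γ ∈ upperBounds Sp := by
        rintro r ⟨γ', hγ', hγ'pos, rfl⟩
        exact hslope _ hγ _ hγ' hneg hγ'pos
      have : s₀ ≤ (f γ - f 0) / γ := csSup_le hSpne hub
      have := (le_div_iff_of_neg hneg).mp this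
      linarith
    · subst hzero; simp
    · have : (f γ - f 0) / γ ≤ s₀ := le_csSup hSpbdd ⟨γ, hγ, hpos, rfl⟩
      have := (div_le_iff₀ hpos).mp this
      linarith
  have hclosed : IsClosed (superdiff n ⇑Ul ⇑ml Θ w) := by
    have heq : superdiff n ⇑Ul ⇑ml Θ w
        = ⋂ γ ∈ Γ, {s : ℝ | f γ ≤ f 0 + s * γ} := by
      ext s
      simp only [superdiff, Set.mem_setOf_eq, Set.mem_iInter]
      exact Iff.rfl
    rw [heq]
    refine isClosed_biInter fun γ _ => ?_
    exact isClosed_le continuous_const (continuous_const.add (continuous_id.mul continuous_const))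
  have hbounded : Bornology.IsBounded (superdiff n ⇑Ul ⇑ml Θ w) := by
    refine Bornology.IsBounded.subset (Metric.isBounded_Icc _ _)
      (t := Set.Icc ((f (ε/2) - f 0) / (ε/2)) ((f 0 - f (-(ε/2))) / (ε/2))) ?_
    intro s hs
    have h1 := hs _ hεmem
    have h2 := hs _ hεneg
    constructor
    · rw [div_le_iff₀ hε2]; linarith
    · rw [le_div_iff₀ hε2]; linarith
  exact ⟨hsym, h0int, ⟨s₀, hs₀mem⟩, hclosed, hbounded⟩
end
end
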